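/- With the notation of the uniform-transition polytope (O nonempty, j₀ ∈ O), every extreme point of the polytope {x : x_j = 0 for j ∈ I, x_j = x_{j₀} for j ∈ O, 0 ≤ x_j ≤ x_{j₀} for j ∈ F, ∑ x_j = 1} is a uniform probability measure on a support S with O ⊆ S ⊆ O ∪ F. -/

import Mathlib

open BigOperators

theorem stmt3 (n : ℕ) (O F I : Finset (Fin n))
    (hOF : Disjoint O F) (hOI : Disjoint O I) (hFI : Disjoint F I)
    (hcover : O ∪ F ∪ I = Finset.univ) (hO : O.Nonempty)
    (j₀ : Fin n) (hj₀ : j₀ ∈ O) :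
    ∀ x ∈ Set.extremePoints ℝ
      {x : Fin n → ℝ | (∀ j ∈ I, x j = 0) ∧ (∀ j ∈ O, x j = x j₀) ∧
        (∀ j ∈ F, 0 ≤ x j ∧ x j ≤ x j₀) ∧ ∑ j, x j = 1},
      ∃ S : Finset (Fin n), O ⊆ S ∧ S ⊆ O ∪ F ∧
        ∀ j, x j = if j ∈ S then ((S.card : ℝ))⁻¹ else 0 := by
  intro x hx
  obtain ⟨⟨hI, hOx, hFx, hsum⟩, hext⟩ := hx
  set t := x j₀ with ht
  -- Step 1: dichotomy on F
  have hdich : ∀ j ∈ F, x j = 0 ∨ x j = t := by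
    by_contra h
    push_neg at h
    obtain ⟨j₁, hj₁F, hne0, hnet⟩ := h
    have h0 : 0 < x j₁ := lt_of_le_of_ne (hFx j₁ hj₁F).1 (Ne.symm hne0)
    have h1 : x j₁ < t := lt_of_le_of_ne (hFx j₁ hj₁F).2 hnet
    set SF : Finset (Fin n) := F.filter (fun j => x j = t) with hSF
    set P : Finset (Fin n) := O ∪ SF with hP
    have hj₁P : j₁ ∉ P := by
      intro hmem
      rcases Finset.mem_union.1 hmem with h' | h'
      · exact (Finset.disjoint_left.1 hOF h') hj₁F
      · exact hnet (Finset.mem_filter.1 h').2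
    have hPcard : 0 < P.card := Finset.card_pos.2 ⟨j₀, Finset.mem_union_left _ hj₀⟩
    set m : ℝ := (P.card : ℝ) with hmdef
    have hm1 : 1 ≤ m := by
      exact Nat.one_le_cast.mpr hPcard
    have hm0 : 0 < m := lt_of_lt_of_le one_pos hm1
    -- the direction
    set d : Fin n → ℝ := fun j =>
      (if j = j₁ then (1:ℝ) else 0) + (if j ∈ P then -m⁻¹ else 0) with hd
    have hdj₁ : d j₁ = 1 := by simp [hd, hj₁P]
    have hdP : ∀ j ∈ P, d j = -m⁻¹ := by
      intro j hj
      have : j ≠ j₁ := fun h => hj₁P (h ▸ hj)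
      simp [hd, this, hj]
    have hdother : ∀ j, j ≠ j₁ → j ∉ P → d j = 0 := by
      intro j h1 h2; simp [hd, h1, h2]
    have hdsum : ∑ j, d j = 0 := by
      rw [hd]
      rw [Finset.sum_add_distrib]
      rw [Finset.sum_ite_eq' Finset.univ j₁ (fun _ => (1:ℝ))]
      have : ∑ j, (if j ∈ P then -m⁻¹ else 0) = ∑ j ∈ P, -m⁻¹ := by
        rw [Finset.sum_ite_mem, Finset.univ_inter]
      rw [this, Finset.sum_const, nsmul_eq_mul, ← hmdef, mul_neg,
        mul_inv_cancel₀ hm0.ne']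
      norm_num
    -- the perturbation size
    have hFSFne : (F \ SF).Nonempty := by
      refine ⟨j₁, Finset.mem_sdiff.2 ⟨hj₁F, ?_⟩⟩
      simp [hSF, hnet]
    set c : ℝ := min (x j₁) ((F \ SF).inf' hFSFne (fun j => t - x j)) with hc
    have hc0 : 0 < c := by
      apply lt_min h0
      rw [Finset.lt_inf'_iff]
      intro j hj
      obtain ⟨hjF, hjSF⟩ := Finset.mem_sdiff.1 hj
      have : x j ≠ t := fun h => hjSF (Finset.mem_filter.2 ⟨hjF, h⟩)
      have := lt_of_le_of_ne (hFx j hjF).2 this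
      linarith
    have hcx : c ≤ x j₁ := min_le_left _ _
    have hct : c ≤ t - x j₁ := by
      refine le_trans (min_le_right _ _) ?_
      exact Finset.inf'_le _ (Finset.mem_sdiff.2 ⟨hj₁F, by simp [hSF, hnet]⟩)
    have hcj : ∀ j ∈ F, j ∉ SF → c ≤ t - x j := by
      intro j hjF hjSF
      exact le_trans (min_le_right _ _) (Finset.inf'_le _ (Finset.mem_sdiff.2 ⟨hjF, hjSF⟩))
    set ε : ℝ := c / 4 with hεdef
    have hε0 : 0 < ε := by positivity
    -- membership of the perturbed points
    have hmem : ∀ e : ℝ, |e| ≤ ε →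
        (fun j => x j + e * d j) ∈
          {x : Fin n → ℝ | (∀ j ∈ I, x j = 0) ∧ (∀ j ∈ O, x j = x j₀) ∧
            (∀ j ∈ F, 0 ≤ x j ∧ x j ≤ x j₀) ∧ ∑ j, x j = 1} := by
      intro e he
      obtain ⟨hel, heu⟩ := abs_le.1 he
      have hem : |e * m⁻¹| ≤ ε := by
        rw [abs_mul, abs_of_nonneg (inv_nonneg.2 hm0.le)]
        calc |e| * m⁻¹ ≤ |e| * 1 := by
              apply mul_le_mul_of_nonneg_left _ (abs_nonneg e)
              exact inv_le_one_of_one_le₀ hm1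
          _ = |e| := mul_one _
          _ ≤ ε := he
      obtain ⟨heml, hemu⟩ := abs_le.1 hem
      have hdj₀ : d j₀ = -m⁻¹ := hdP j₀ (Finset.mem_union_left _ hj₀)
      have hy₀ : x j₀ + e * d j₀ = t - e * m⁻¹ := by rw [hdj₀]; ring
      refine ⟨?_, ?_, ?_, ?_⟩
      · intro j hjI
        have hjP : j ∉ P := by
          intro hmem'
          rcases Finset.mem_union.1 hmem' with h' | h'
          · exact (Finset.disjoint_left.1 hOI h') hjI
          · exact (Finset.disjoint_left.1 hFI (Finset.mem_filter.1 h').1) hjI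
        have hjne : j ≠ j₁ := fun h => (Finset.disjoint_left.1 hFI hj₁F) (h ▸ hjI)
        show x j + e * d j = 0
        rw [hdother j hjne hjP, hI j hjI]; ring
      · intro j hjO
        have hdj : d j = -m⁻¹ := hdP j (Finset.mem_union_left _ hjO)
        show x j + e * d j = x j₀ + e * d j₀
        rw [hdj, hOx j hjO, hdj₀]
      · intro j hjF
        show 0 ≤ x j + e * d j ∧ x j + e * d j ≤ x j₀ + e * d j₀
        rw [hy₀]
        by_cases hjj : j = j₁
        · subst hjj
          rw [hdj₁]
          constructor <;> nlinarith
        · by_cases hjSF : j ∈ SF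
          · have : d j = -m⁻¹ := hdP j (Finset.mem_union_right _ hjSF)
            rw [this, (Finset.mem_filter.1 hjSF).2]
            constructor
            · nlinarith
            · have h' : t + e * -m⁻¹ = t - e * m⁻¹ := by ring
              rw [h']
          · have hjP : j ∉ P := by
              intro hmem'
              rcases Finset.mem_union.1 hmem' with h' | h'
              · exact (Finset.disjoint_left.1 hOF h') hjF
              · exact hjSF h'
            rw [hdother j hjj hjP]
            have := hcj j hjF hjSF
            constructor
            · linarith [(hFx j hjF).1]
            · nlinarith [(hFx j hjF).1]
      · rw [Finset.sum_add_distrib, hsum, ← Finset.mul_sum, hdsum]; ring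
    have hmem₁ := hmem ε (by rw [abs_of_pos hε0])
    have hmem₂ := hmem (-ε) (by rw [abs_neg, abs_of_pos hε0])
    have hseg : x ∈ openSegment ℝ (fun j => x j + ε * d j) (fun j => x j + (-ε) * d j) := by
      refine ⟨1/2, 1/2, by norm_num, by norm_num, by norm_num, ?_⟩
      funext j
      show (1/2 : ℝ) * (x j + ε * d j) + (1/2 : ℝ) * (x j + (-ε) * d j) = x j
      ring
    have := (hext hmem₁ hmem₂ hseg)
    have := congrFun this j₁
    simp only [hdj₁] at this
    nlinarith
  -- Step 2: build S
  set S : Finset (Fin n) := O ∪ F.filter (fun j => x j = t) with hS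
  have hOS : O ⊆ S := Finset.subset_union_left
  have hSOF : S ⊆ O ∪ F := by
    apply Finset.union_subset Finset.subset_union_left
    exact (Finset.filter_subset _ _).trans Finset.subset_union_right
  have hxS : ∀ j ∈ S, x j = t := by
    intro j hj
    rcases Finset.mem_union.1 hj with h' | h'
    · exact hOx j h'
    · exact (Finset.mem_filter.1 h').2
  have hxnS : ∀ j, j ∉ S → x j = 0 := by
    intro j hj
    have : j ∈ O ∪ F ∪ I := hcover ▸ Finset.mem_univ j
    rcases Finset.mem_union.1 this with h' | h'
    · rcases Finset.mem_union.1 h' with h'' | h''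
      · exact absurd (hOS h'') hj
      · rcases hdich j h'' with h3 | h3
        · exact h3
        · exact absurd (Finset.mem_union_right _ (Finset.mem_filter.2 ⟨h'', h3⟩)) hj
    · exact hI j h'
  have hsum' : (S.card : ℝ) * t = 1 := by
    rw [← hsum]
    rw [← Finset.sum_subset (Finset.subset_univ S) (fun j _ hj => hxnS j hj)]
    rw [Finset.sum_congr rfl hxS, Finset.sum_const, nsmul_eq_mul]
  have hcard0 : (S.card : ℝ) ≠ 0 := by
    intro h; rw [h, zero_mul] at hsum'; exact one_ne_zero hsum'.symm
  have htval : t = ((S.card : ℝ))⁻¹ := by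
    field_simp
    linarith
  refine ⟨S, hOS, hSOF, fun j => ?_⟩
  by_cases hj : j ∈ S
  · rw [if_pos hj, hxS j hj, htval]
  · rw [if_neg hj, hxnS j hj]
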